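/- arXiv:1810.08283 — 4 statements merged into one kernel-verified Lean document; each statement's English description precedes it below -/
import Mathlib

section
/- Let M ≥ 2 and k > 0. Suppose q₁, q₂ ∈ L¹(ℝ^M) are such that their Fourier transforms 𝔉(qⱼ)(ξ) := ∫_{ℝ^M} qⱼ(z) e^{i ξ·z} dz vanish for all ξ with |ξ| > 2k. If 𝔉(q₁)(k(d_x − d_y)) = 𝔉(q₂)(k(d_x − d_y)) for all d_x, d_y ∈ S^{M−1}, then q₁ = q₂ almost everywhere. -/
open MeasureTheory

/-- The Fourier transform `𝔉(q)(ξ) = ∫ q(z) e^{i ξ·z} dz` on `ℝ^M`. -/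
noncomputable def fourierInt {M : ℕ} (q : EuclideanSpace ℝ (Fin M) → ℂ)
    (ξ : EuclideanSpace ℝ (Fin M)) : ℂ :=
  ∫ z, q z * Complex.exp (Complex.I * ((inner ℝ ξ z : ℝ) : ℂ))

open scoped FourierTransform RealInnerProductSpace ContDiff SchwartzMap

section Aux

variable {V : Type*} [NormedAddCommGroup V] [NormedSpace ℝ V]

/-- A smooth compactly supported real function, complexified, is a Schwartz function. -/
lemma exists_schwartz_of_compactSupport (g : V → ℝ) (hg : ContDiff ℝ ∞ g)
    (h'g : HasCompactSupport g) : ∃ φ : 𝓢(V, ℂ), ∀ x, φ x = (g x : ℂ) := by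
  refine ⟨⟨fun x => (g x : ℂ), ?_, ?_⟩, fun x => rfl⟩
  · exact Complex.ofRealCLM.contDiff.comp hg
  · intro k n
    have hnorm : ∀ x, ‖iteratedFDeriv ℝ n (fun y => (g y : ℂ)) x‖
        = ‖iteratedFDeriv ℝ n g x‖ := by
      intro x
      have := (Complex.ofRealLI).norm_iteratedFDeriv_comp_left (f := g) (hg.contDiffAt (x := x))
        (i := n) (by exact_mod_cast le_top)
      exact this
    set h : V → ℝ := fun x => ‖x‖ ^ k * ‖iteratedFDeriv ℝ n g x‖ with hh
    have hcont : Continuous h :=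
      (continuous_norm.pow k).mul (hg.continuous_iteratedFDeriv (by exact_mod_cast le_top)).norm
    have hsupp : HasCompactSupport h := by
      apply HasCompactSupport.intro (h'g.iteratedFDeriv (𝕜 := ℝ) n).isCompact
      intro x hx
      have : iteratedFDeriv ℝ n g x = 0 := image_eq_zero_of_notMem_tsupport hx
      simp only [hh, this, norm_zero, mul_zero]
    obtain ⟨C, hC⟩ := hsupp.exists_bound_of_continuous hcont
    refine ⟨C, fun x => ?_⟩
    rw [hnorm]
    calc ‖x‖ ^ k * ‖iteratedFDeriv ℝ n g x‖ ≤ |h x| := le_abs_self _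
    _ ≤ C := by simpa [Real.norm_eq_abs] using hC x

end Aux

section Aux2

variable {M : ℕ}

local notation "V" => EuclideanSpace ℝ (Fin M)

/-- Relation between `fourierInt` and Mathlib's Fourier transform. -/
lemma fourierInt_eq_fourierIntegral (q : V → ℂ) (w : V) :
    𝓕 q w = fourierInt q ((-(2 * Real.pi)) • w) := by
  rw [Real.fourier_eq', fourierInt]
  congr 1
  ext v
  rw [smul_eq_mul, real_inner_smul_left, real_inner_comm w v, mul_comm]
  congr 1
  push_cast
  ring_nf

/-- An integrable function with vanishing Fourier transform vanishes a.e. -/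
lemma ae_eq_zero_of_fourierIntegral_eq_zero (f : V → ℂ) (hf : Integrable f)
    (h : ∀ w : V, 𝓕 f w = 0) : f =ᵐ[volume] 0 := by
  apply ae_eq_zero_of_integral_contDiff_smul_eq_zero hf.locallyIntegrable
  intro g hg h'g
  obtain ⟨φ, hφ⟩ := exists_schwartz_of_compactSupport g hg h'g
  set ψ : 𝓢(V, ℂ) := (SchwartzMap.fourierTransformCLE ℝ (𝓢(V, ℂ))).symm φ with hψ
  have hFψ : 𝓕 (⇑ψ) = ⇑φ := by
    have : SchwartzMap.fourierTransformCLE ℝ (𝓢(V, ℂ)) ψ = φ :=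
      (SchwartzMap.fourierTransformCLE ℝ (𝓢(V, ℂ))).apply_symm_apply φ
    rw [← this]; rfl
  have flip_eq : (innerₗ V).flip = innerₗ V := by
    apply LinearMap.ext₂
    intro x y
    simp only [LinearMap.flip_apply, innerₗ_apply_apply]
    exact real_inner_comm x y
  have key := VectorFourier.integral_fourierIntegral_smul_eq_flip (L := innerₗ V)
    (μ := (volume : Measure V)) (ν := (volume : Measure V))
    Real.continuous_fourierChar continuous_inner hf ψ.integrable
  rw [flip_eq] at key
  have key' : (∫ ξ : V, (𝓕 f ξ) • ψ ξ) = ∫ x : V, f x • 𝓕 (⇑ψ) x := key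
  have lhs0 : ∫ ξ : V, (𝓕 f ξ) • ψ ξ = 0 := by
    simp only [h, zero_smul, integral_zero]
  have : (∫ x : V, f x • 𝓕 (⇑ψ) x) = 0 := key' ▸ lhs0
  rw [hFψ] at this
  have : (∫ x : V, f x * (g x : ℂ)) = 0 := by
    rw [← this]
    congr 1
    ext x
    rw [hφ x]
    simp [smul_eq_mul]
  calc (∫ x : V, g x • f x) = ∫ x : V, f x * (g x : ℂ) := by
        congr 1; ext x
        simp [Complex.real_smul, mul_comm]
  _ = 0 := this

/-- Geometry: every vector of norm at most `2k` is of the form `k • (dx - dy)` with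
unit vectors `dx`, `dy`, provided the dimension is at least 2. -/
lemma exists_unit_diff (hM : 2 ≤ M) {k : ℝ} (hk : 0 < k) (ξ : V) (hξ : ‖ξ‖ ≤ 2 * k) :
    ∃ dx dy : V, ‖dx‖ = 1 ∧ ‖dy‖ = 1 ∧ ξ = k • (dx - dy) := by
  obtain ⟨v, hv⟩ : ∃ v : V, v = k⁻¹ • ξ := ⟨_, rfl⟩
  have hvnorm : ‖v‖ ≤ 2 := by
    rw [hv, norm_smul, norm_inv, Real.norm_eq_abs, abs_of_pos hk]
    rw [inv_mul_le_iff₀ hk]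
    linarith
  -- find a unit vector orthogonal to v
  obtain ⟨w, hw_mem, hw_ne⟩ : ∃ w ∈ (ℝ ∙ v)ᗮ, w ≠ 0 := by
    by_contra hcon
    push_neg at hcon
    have hbot : (ℝ ∙ v)ᗮ = ⊥ := by
      rw [Submodule.eq_bot_iff]
      intro x hx
      by_contra hx0
      exact hx0 (hcon x hx)
    rw [Submodule.orthogonal_eq_bot_iff] at hbot
    have h1 : Module.finrank ℝ (ℝ ∙ v) ≤ 1 := by
      simpa using finrank_span_le_card ({v} : Set V)
    have h2 : Module.finrank ℝ V = M := finrank_euclideanSpace_fin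
    rw [hbot] at h1
    rw [finrank_top, h2] at h1
    omega
  obtain ⟨w', hw'⟩ : ∃ w' : V, w' = ‖w‖⁻¹ • w := ⟨_, rfl⟩
  have hwnorm : ‖w'‖ = 1 := by
    rw [hw', norm_smul, norm_inv, norm_norm]
    rw [inv_mul_cancel₀ (norm_ne_zero_iff.mpr hw_ne)]
  have hw'_orth : ⟪v, w'⟫ = 0 := by
    have h0 := hw_mem v (Submodule.mem_span_singleton_self v)
    rw [hw', real_inner_smul_right, h0, mul_zero]
  obtain ⟨c, hc⟩ : ∃ c : ℝ, c = Real.sqrt (1 - (‖v‖ / 2) ^ 2) := ⟨_, rfl⟩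
  have hvle : (‖v‖ / 2) ^ 2 ≤ 1 := by
    have h0 : 0 ≤ ‖v‖ := norm_nonneg v
    nlinarith
  have hc2 : c ^ 2 = 1 - (‖v‖ / 2) ^ 2 := by
    rw [hc]; exact Real.sq_sqrt (by linarith)
  obtain ⟨dx, hdx⟩ : ∃ dx : V, dx = (2⁻¹ : ℝ) • v + c • w' := ⟨_, rfl⟩
  obtain ⟨dy, hdy⟩ : ∃ dy : V, dy = c • w' - (2⁻¹ : ℝ) • v := ⟨_, rfl⟩
  have hinner : ⟪(2⁻¹ : ℝ) • v, c • w'⟫ = 0 := by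
    rw [real_inner_smul_left, real_inner_smul_right, hw'_orth]
    ring
  have hhalf : ‖(2⁻¹ : ℝ) • v‖ ^ 2 = (‖v‖ / 2) ^ 2 := by
    rw [norm_smul, Real.norm_eq_abs, abs_of_pos (by norm_num : (0:ℝ) < 2⁻¹)]
    ring
  have hcw : ‖c • w'‖ ^ 2 = c ^ 2 := by
    rw [norm_smul, hwnorm, Real.norm_eq_abs, mul_one, sq_abs]
  have hdxnorm : ‖dx‖ = 1 := by
    have hsq : ‖dx‖ ^ 2 = 1 := by
      rw [hdx, norm_add_sq_real, hinner, hhalf, hcw, hc2]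
      ring
    rw [← Real.sqrt_sq (norm_nonneg dx), hsq, Real.sqrt_one]
  have hdynorm : ‖dy‖ = 1 := by
    have hsq : ‖dy‖ ^ 2 = 1 := by
      have hinner' : ⟪c • w', (2⁻¹ : ℝ) • v⟫ = 0 := by
        rw [real_inner_comm]; exact hinner
      rw [hdy, norm_sub_sq_real, hinner', hhalf, hcw, hc2]
      ring
    rw [← Real.sqrt_sq (norm_nonneg dy), hsq, Real.sqrt_one]
  refine ⟨dx, dy, hdxnorm, hdynorm, ?_⟩
  have hdiff : dx - dy = v := by
    have h' : dx - dy = (2⁻¹ : ℝ) • v + (2⁻¹ : ℝ) • v := by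
      rw [hdx, hdy]; abel
    rw [h', ← add_smul]
    norm_num
  rw [hdiff, hv, smul_smul, mul_inv_cancel₀ hk.ne', one_smul]

end Aux2

/-- If `q₁, q₂ ∈ L¹(ℝ^M)` are band-limited to the ball of radius `2k` and their Fourier
transforms agree on all frequencies `k(d_x − d_y)` with `d_x, d_y` on the unit sphere,
then `q₁ = q₂` almost everywhere. -/
theorem farField_uniqueness (M : ℕ) (hM : 2 ≤ M) (k : ℝ) (hk : 0 < k)
    (q₁ q₂ : EuclideanSpace ℝ (Fin M) → ℂ)
    (hq₁ : Integrable q₁) (hq₂ : Integrable q₂)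
    (hb₁ : ∀ ξ : EuclideanSpace ℝ (Fin M), 2 * k < ‖ξ‖ → fourierInt q₁ ξ = 0)
    (hb₂ : ∀ ξ : EuclideanSpace ℝ (Fin M), 2 * k < ‖ξ‖ → fourierInt q₂ ξ = 0)
    (heq : ∀ dx dy : EuclideanSpace ℝ (Fin M), ‖dx‖ = 1 → ‖dy‖ = 1 →
      fourierInt q₁ (k • (dx - dy)) = fourierInt q₂ (k • (dx - dy))) :
    q₁ =ᵐ[volume] q₂ := by
  -- All Fourier data agree
  have hall : ∀ ξ : EuclideanSpace ℝ (Fin M), fourierInt q₁ ξ = fourierInt q₂ ξ := by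
    intro ξ
    rcases le_or_gt ‖ξ‖ (2 * k) with h | h
    · obtain ⟨dx, dy, hdx, hdy, hξeq⟩ := exists_unit_diff hM hk ξ h
      rw [hξeq]
      exact heq dx dy hdx hdy
    · rw [hb₁ ξ h, hb₂ ξ h]
  -- Hence the Mathlib Fourier transforms of the difference vanish
  set f : EuclideanSpace ℝ (Fin M) → ℂ := q₁ - q₂ with hf
  have hfint : Integrable f := hq₁.sub hq₂
  have hF : ∀ w : EuclideanSpace ℝ (Fin M), 𝓕 f w = 0 := by
    intro w
    have h1 : 𝓕 f w = 𝓕 q₁ w - 𝓕 q₂ w := by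
      rw [Real.fourier_eq, Real.fourier_eq, Real.fourier_eq]
      rw [← integral_sub]
      · congr 1
        ext v
        simp [hf, smul_sub]
      · exact (Real.fourierIntegral_convergent_iff w).2 hq₁
      · exact (Real.fourierIntegral_convergent_iff w).2 hq₂
    rw [h1, fourierInt_eq_fourierIntegral, fourierInt_eq_fourierIntegral, hall, sub_self]
  have hzero : f =ᵐ[volume] 0 := ae_eq_zero_of_fourierIntegral_eq_zero f hfint hF
  filter_upwards [hzero] with x hx
  have : q₁ x - q₂ x = 0 := hx
  exact sub_eq_zero.mp this
end

section
/- Let n ≥ 2 and let w₁, w₂ ∈ ℂⁿ be unit vectors such that the Hermitian inner product ⟨w₁, w₂⟩ := Σᵢ conj(w₁ᵢ) w₂ᵢ is a real number t. Let A := w₁ w₁ᵀ + w₂ w₂ᵀ. Then, counted with multiplicity, the eigenvalues of the Hermitian matrix AᴴA are (1 + |t|)², (1 − |t|)², and 0 with multiplicity n − 2; equivalently, the singular values of A are σ₀ = 1 + |Re⟨w₁, w₂⟩|, σ₁ = 1 − |Re⟨w₁, w₂⟩|, and σ₂ = σ₃ = ⋯ = 0. -/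
open Polynomial Matrix

private lemma eval_charpoly' {m : Type*} [DecidableEq m] [Fintype m]
    (M : Matrix m m ℂ) (x : ℂ) :
    (M.charpoly).eval x = (x • (1 : Matrix m m ℂ) - M).det := by
  rw [Matrix.charpoly, ← Polynomial.coe_evalRingHom, RingHom.map_det]
  congr 1
  ext i j
  by_cases h : i = j
  · subst h
    simp [Matrix.charmatrix_apply_eq, Matrix.one_apply_eq]
  · simp [Matrix.charmatrix_apply_ne _ _ _ h, Matrix.one_apply_ne h]

/-- For unit vectors `w₁, w₂ ∈ ℂⁿ` (`n ≥ 2`) whose Hermitian inner product is a real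
number `t`, the eigenvalues of `Aᴴ A` with `A = w₁ w₁ᵀ + w₂ w₂ᵀ`, counted with
multiplicity, are `(1 + |t|)²`, `(1 − |t|)²` and `0` (`n − 2` times); i.e. the singular
values of `A` are `1 + |t|`, `1 − |t|` and `0`. -/
theorem singular_values_two_scatterers (n : ℕ) (hn : 2 ≤ n)
    (w₁ w₂ : EuclideanSpace ℂ (Fin n)) (h1 : ‖w₁‖ = 1) (h2 : ‖w₂‖ = 1)
    (t : ℝ) (ht : (inner ℂ w₁ w₂ : ℂ) = (t : ℂ)) :
    let A : Matrix (Fin n) (Fin n) ℂ :=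
      Matrix.of (fun i j => w₁ i * w₁ j) + Matrix.of (fun i j => w₂ i * w₂ j)
    (Aᴴ * A).charpoly =
      (X - C (((1 + |t|) ^ 2 : ℝ) : ℂ)) * (X - C (((1 - |t|) ^ 2 : ℝ) : ℂ)) * X ^ (n - 2) := by
  intro A
  classical
  have hA : A = Matrix.of (fun i j => w₁ i * w₁ j) + Matrix.of (fun i j => w₂ i * w₂ j) := rfl
  have hw11 : (∑ k, (starRingEnd ℂ) (w₁ k) * w₁ k) = 1 := by
    have h : (inner ℂ w₁ w₁ : ℂ) = 1 := by
      rw [inner_self_eq_norm_sq_to_K, h1]; norm_num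
    simpa only [PiLp.inner_apply, RCLike.inner_apply, mul_comm] using h
  have hw22 : (∑ k, (starRingEnd ℂ) (w₂ k) * w₂ k) = 1 := by
    have h : (inner ℂ w₂ w₂ : ℂ) = 1 := by
      rw [inner_self_eq_norm_sq_to_K, h2]; norm_num
    simpa only [PiLp.inner_apply, RCLike.inner_apply, mul_comm] using h
  have hw12 : (∑ k, (starRingEnd ℂ) (w₁ k) * w₂ k) = (t : ℂ) := by
    simpa only [PiLp.inner_apply, RCLike.inner_apply, mul_comm] using ht
  have hw21 : (∑ k, (starRingEnd ℂ) (w₂ k) * w₁ k) = (t : ℂ) := by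
    have h : (inner ℂ w₂ w₁ : ℂ) = (t : ℂ) := by
      rw [← inner_conj_symm, ht, Complex.conj_ofReal]
    simpa only [PiLp.inner_apply, RCLike.inner_apply, mul_comm] using h
  set B : Matrix (Fin n) (Fin 2) ℂ :=
    Matrix.of (fun i k => if k = 0 then (starRingEnd ℂ) (w₁ i) else (starRingEnd ℂ) (w₂ i))
    with hB
  set D : Matrix (Fin 2) (Fin n) ℂ :=
    Matrix.of (fun k j => if k = 0 then w₁ j + (t : ℂ) * w₂ j else (t : ℂ) * w₁ j + w₂ j)
    with hD
  have hBD : Aᴴ * A = B * D := by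
    ext i j
    rw [Matrix.mul_apply]
    calc ∑ k, (Aᴴ) i k * A k j
        = ∑ k, (((starRingEnd ℂ) (w₁ i) * w₁ j) * ((starRingEnd ℂ) (w₁ k) * w₁ k)
          + ((starRingEnd ℂ) (w₁ i) * w₂ j) * ((starRingEnd ℂ) (w₁ k) * w₂ k)
          + ((starRingEnd ℂ) (w₂ i) * w₁ j) * ((starRingEnd ℂ) (w₂ k) * w₁ k)
          + ((starRingEnd ℂ) (w₂ i) * w₂ j) * ((starRingEnd ℂ) (w₂ k) * w₂ k)) := by
          refine Finset.sum_congr rfl fun k _ => ?_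
          rw [Matrix.conjTranspose_apply, hA]
          simp only [Matrix.add_apply, Matrix.of_apply, star_add, star_mul']
          simp only [RCLike.star_def]
          ring
      _ = ((starRingEnd ℂ) (w₁ i) * w₁ j) * (∑ k, (starRingEnd ℂ) (w₁ k) * w₁ k)
          + ((starRingEnd ℂ) (w₁ i) * w₂ j) * (∑ k, (starRingEnd ℂ) (w₁ k) * w₂ k)
          + ((starRingEnd ℂ) (w₂ i) * w₁ j) * (∑ k, (starRingEnd ℂ) (w₂ k) * w₁ k)
          + ((starRingEnd ℂ) (w₂ i) * w₂ j) * (∑ k, (starRingEnd ℂ) (w₂ k) * w₂ k) := by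
          simp [Finset.sum_add_distrib, Finset.mul_sum]
      _ = (B * D) i j := by
          rw [hw11, hw12, hw21, hw22, Matrix.mul_apply, Fin.sum_univ_two]
          simp only [hB, hD, Matrix.of_apply]
          norm_num
          ring
  have hDB : D * B = !![1 + (t : ℂ) ^ 2, 2 * (t : ℂ); 2 * (t : ℂ), 1 + (t : ℂ) ^ 2] := by
    ext k l
    rw [Matrix.mul_apply]
    fin_cases k <;> fin_cases l <;>
      simp only [hB, hD, Matrix.of_apply, Fin.isValue] <;>
      norm_num
    · calc ∑ j, (w₁ j + (t : ℂ) * w₂ j) * (starRingEnd ℂ) (w₁ j)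
          = ∑ j, ((starRingEnd ℂ) (w₁ j) * w₁ j + (t : ℂ) * ((starRingEnd ℂ) (w₁ j) * w₂ j)) := by
            refine Finset.sum_congr rfl fun j _ => ?_; ring
        _ = 1 + (t : ℂ) ^ 2 := by
            rw [Finset.sum_add_distrib, ← Finset.mul_sum, hw11, hw12]; ring
    · calc ∑ j, (w₁ j + (t : ℂ) * w₂ j) * (starRingEnd ℂ) (w₂ j)
          = ∑ j, ((starRingEnd ℂ) (w₂ j) * w₁ j + (t : ℂ) * ((starRingEnd ℂ) (w₂ j) * w₂ j)) := by
            refine Finset.sum_congr rfl fun j _ => ?_; ring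
        _ = 2 * t := by
            rw [Finset.sum_add_distrib, ← Finset.mul_sum, hw21, hw22]; ring
    · calc ∑ j, ((t : ℂ) * w₁ j + w₂ j) * (starRingEnd ℂ) (w₁ j)
          = ∑ j, ((t : ℂ) * ((starRingEnd ℂ) (w₁ j) * w₁ j) + (starRingEnd ℂ) (w₁ j) * w₂ j) := by
            refine Finset.sum_congr rfl fun j _ => ?_; ring
        _ = 2 * t := by
            rw [Finset.sum_add_distrib, ← Finset.mul_sum, hw11, hw12]; ring
    · calc ∑ j, ((t : ℂ) * w₁ j + w₂ j) * (starRingEnd ℂ) (w₂ j)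
          = ∑ j, ((t : ℂ) * ((starRingEnd ℂ) (w₂ j) * w₁ j) + (starRingEnd ℂ) (w₂ j) * w₂ j) := by
            refine Finset.sum_congr rfl fun j _ => ?_; ring
        _ = 1 + (t : ℂ) ^ 2 := by
            rw [Finset.sum_add_distrib, ← Finset.mul_sum, hw21, hw22]; ring
  apply Polynomial.eq_of_infinite_eval_eq
  have hinf : ({x : ℂ | x ≠ 0}).Infinite := by
    have h0 : ({(0 : ℂ)}ᶜ : Set ℂ).Infinite := (Set.finite_singleton 0).infinite_compl
    simpa [Set.compl_singleton_eq] using h0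
  refine hinf.mono fun x hx => ?_
  have hx : x ≠ 0 := hx
  simp only [Set.mem_setOf_eq]
  rw [eval_charpoly', hBD]
  have h1' : x • (1 : Matrix (Fin n) (Fin n) ℂ) - B * D
      = x • ((1 : Matrix (Fin n) (Fin n) ℂ) - (x⁻¹ • B) * D) := by
    rw [smul_sub, Matrix.smul_mul, smul_smul, mul_inv_cancel₀ hx, one_smul]
  rw [h1', Matrix.det_smul, Matrix.det_one_sub_mul_comm, Matrix.mul_smul, hDB]
  have h2' : (1 : Matrix (Fin 2) (Fin 2) ℂ)
        - x⁻¹ • !![1 + (t : ℂ) ^ 2, 2 * (t : ℂ); 2 * (t : ℂ), 1 + (t : ℂ) ^ 2]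
      = !![1 - x⁻¹ * (1 + (t : ℂ) ^ 2), -(x⁻¹ * (2 * t));
          -(x⁻¹ * (2 * t)), 1 - x⁻¹ * (1 + (t : ℂ) ^ 2)] := by
    ext k l
    fin_cases k <;> fin_cases l <;> simp [Matrix.one_apply]
  rw [h2', Matrix.det_fin_two_of]
  simp only [eval_mul, eval_pow, eval_sub, eval_X, eval_C, Fintype.card_fin]
  have hxn : x ^ n = x ^ (n - 2) * x ^ 2 := by
    rw [← pow_add, Nat.sub_add_cancel hn]
  rw [hxn]
  rcases abs_cases t with ⟨h, _⟩ | ⟨h, _⟩ <;> rw [h] <;> push_cast <;> field_simp <;> ring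
end

section
/- Let n ≥ 2 and let w₁, w₂ ∈ ℂⁿ be unit vectors such that ⟨w₁, w₂⟩ := Σᵢ conj(w₁ᵢ) w₂ᵢ is a real number t, and let A := w₁ w₁ᵀ + w₂ w₂ᵀ. Let σ₀ and σ₁ denote respectively the largest and second largest singular values of A (counted with multiplicity). Then σ₀ > 0 and the quotient satisfies σ₁ / σ₀ = (1 − |Re⟨w₁, w₂⟩|) / (1 + |Re⟨w₁, w₂⟩|). -/
open Polynomial Matrix

lemma eval_charpoly_det {k : ℕ} (M : Matrix (Fin k) (Fin k) ℂ) (x : ℂ) :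
    (M.charpoly).eval x = (x • (1 : Matrix (Fin k) (Fin k) ℂ) - M).det := by
  rw [Matrix.charpoly, _root_.eval_det, matPolyEquiv_charmatrix]
  simp only [eval_sub, eval_X, eval_C, smul_eq_diagonal_mul, Matrix.scalar]
  congr 1
  ext i j
  simp [Matrix.one_apply, Matrix.diagonal_apply, Pi.algebraMap_apply, Algebra.algebraMap_self_apply]

lemma charpoly_comm_aux {n : ℕ} (P : Matrix (Fin n) (Fin 2) ℂ) (Q : Matrix (Fin 2) (Fin n) ℂ) :
    (P * Q).charpoly * X ^ 2 = (Q * P).charpoly * X ^ n := by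
  apply Polynomial.eq_of_infinite_eval_eq
  apply Set.Infinite.mono (s := {(0 : ℂ)}ᶜ)
  · intro x hx
    have hx : x ≠ 0 := hx
    simp only [Set.mem_setOf_eq, eval_mul, eval_pow, eval_X, eval_charpoly_det]
    have e1 : x • (1 : Matrix (Fin n) (Fin n) ℂ) - P * Q
        = x • ((1 : Matrix (Fin n) (Fin n) ℂ) - (x⁻¹ • P) * Q) := by
      rw [smul_sub, Matrix.smul_mul, smul_smul, mul_inv_cancel₀ hx, one_smul]
    have e2 : x • (1 : Matrix (Fin 2) (Fin 2) ℂ) - Q * P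
        = x • ((1 : Matrix (Fin 2) (Fin 2) ℂ) - Q * (x⁻¹ • P)) := by
      rw [smul_sub, Matrix.mul_smul, smul_smul, mul_inv_cancel₀ hx, one_smul]
    rw [e1, e2, Matrix.det_smul, Matrix.det_smul, Matrix.det_one_sub_mul_comm]
    simp only [Fintype.card_fin]
    ring
  · exact Set.Finite.infinite_compl (Set.finite_singleton 0)

lemma charpoly_two_aux (t : ℂ) :
    (!![1 + t ^ 2, 2 * t; 2 * t, 1 + t ^ 2] : Matrix (Fin 2) (Fin 2) ℂ).charpoly
      = (X - C ((1 + t) ^ 2)) * (X - C ((1 - t) ^ 2)) := by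
  apply Polynomial.eq_of_infinite_eval_eq
  apply Set.Infinite.mono (s := (Set.univ : Set ℂ))
  · intro x _
    simp only [Set.mem_setOf_eq, eval_mul, eval_sub, eval_X, eval_C, eval_charpoly_det,
      Matrix.det_fin_two, Matrix.sub_apply, Matrix.smul_apply, Matrix.one_apply,
      Matrix.of_apply, Matrix.cons_val', Matrix.cons_val_zero, Matrix.cons_val_one,
      Matrix.head_cons, Matrix.head_fin_const, Matrix.empty_val', Matrix.cons_val_fin_one]
    norm_num
    ring
  · exact Set.infinite_univ

set_option maxHeartbeats 1000000 in
/-- For unit vectors `w₁, w₂ ∈ ℂⁿ` (`n ≥ 2`) whose Hermitian inner product is a real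
number `t`, and `A = w₁ w₁ᵀ + w₂ w₂ᵀ`: if `σ : Fin n → ℝ` enumerates the singular values
of `A` in decreasing order (i.e. `σ` is antitone, nonnegative, and the characteristic
polynomial of `Aᴴ A` is `∏ i, (X − σᵢ²)`), then the largest singular value `σ₀` is
positive and `σ₁ / σ₀ = (1 − |Re⟨w₁, w₂⟩|) / (1 + |Re⟨w₁, w₂⟩|)`. -/
theorem singular_value_ratio_two_scatterers (n : ℕ) (hn : 2 ≤ n)
    (w₁ w₂ : EuclideanSpace ℂ (Fin n)) (h1 : ‖w₁‖ = 1) (h2 : ‖w₂‖ = 1)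
    (t : ℝ) (ht : (inner ℂ w₁ w₂ : ℂ) = (t : ℂ))
    (A : Matrix (Fin n) (Fin n) ℂ)
    (hA : A = Matrix.of (fun i j => w₁ i * w₁ j) + Matrix.of (fun i j => w₂ i * w₂ j))
    (σ : Fin n → ℝ) (hσ_anti : Antitone σ) (hσ_nonneg : ∀ i, 0 ≤ σ i)
    (hσ : (Aᴴ * A).charpoly = ∏ i, (X - C ((σ i : ℂ) ^ 2))) :
    0 < σ ⟨0, by omega⟩ ∧
    σ ⟨1, by omega⟩ / σ ⟨0, by omega⟩ =
      (1 - |(inner ℂ w₁ w₂ : ℂ).re|) / (1 + |(inner ℂ w₁ w₂ : ℂ).re|) := by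
  -- inner product sums
  have h12 : ∑ k, (starRingEnd ℂ) (w₁ k) * w₂ k = (t : ℂ) := by
    rw [← ht]; simp [PiLp.inner_apply, RCLike.inner_apply, mul_comm]
  have h21 : ∑ k, (starRingEnd ℂ) (w₂ k) * w₁ k = (t : ℂ) := by
    have : (inner ℂ w₂ w₁ : ℂ) = (starRingEnd ℂ) (inner ℂ w₁ w₂ : ℂ) := (inner_conj_symm w₂ w₁).symm
    rw [ht] at this
    simp only [Complex.conj_ofReal] at this
    rw [← this]; simp [PiLp.inner_apply, RCLike.inner_apply, mul_comm]
  have h11 : ∑ k, (starRingEnd ℂ) (w₁ k) * w₁ k = 1 := by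
    have : (inner ℂ w₁ w₁ : ℂ) = 1 := by rw [inner_self_eq_norm_sq_to_K, h1]; norm_num
    rw [← this, PiLp.inner_apply]; simp [RCLike.inner_apply, mul_comm, Complex.mul_conj']
  have h22 : ∑ k, (starRingEnd ℂ) (w₂ k) * w₂ k = 1 := by
    have : (inner ℂ w₂ w₂ : ℂ) = 1 := by rw [inner_self_eq_norm_sq_to_K, h2]; norm_num
    rw [← this, PiLp.inner_apply]; simp [RCLike.inner_apply, mul_comm, Complex.mul_conj']
  -- |t| ≤ 1
  have htle : |t| ≤ 1 := by
    have h := norm_inner_le_norm (𝕜 := ℂ) w₁ w₂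
    rw [ht, h1, h2] at h
    simpa [Complex.norm_real, Real.norm_eq_abs] using h
  -- the rank-2 factorization  Aᴴ A = P * Q
  set P : Matrix (Fin n) (Fin 2) ℂ := Matrix.of (fun i k =>
    if k = 0 then (starRingEnd ℂ) (w₁ i) + t * (starRingEnd ℂ) (w₂ i)
    else (t : ℂ) * (starRingEnd ℂ) (w₁ i) + (starRingEnd ℂ) (w₂ i)) with hP
  set Q : Matrix (Fin 2) (Fin n) ℂ := Matrix.of (fun k j =>
    if k = 0 then w₁ j else w₂ j) with hQ
  have hM : Aᴴ * A = P * Q := by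
    ext i j
    have expand : ∀ k, (starRingEnd ℂ) (A k i) * A k j =
        (starRingEnd ℂ) (w₁ i) * w₁ j * ((starRingEnd ℂ) (w₁ k) * w₁ k)
        + (starRingEnd ℂ) (w₁ i) * w₂ j * ((starRingEnd ℂ) (w₁ k) * w₂ k)
        + (starRingEnd ℂ) (w₂ i) * w₁ j * ((starRingEnd ℂ) (w₂ k) * w₁ k)
        + (starRingEnd ℂ) (w₂ i) * w₂ j * ((starRingEnd ℂ) (w₂ k) * w₂ k) := by
      intro k
      simp only [hA, Matrix.add_apply, Matrix.of_apply, map_add, RingHom.map_mul]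
      ring
    rw [Matrix.mul_apply, Matrix.mul_apply]
    simp only [Matrix.conjTranspose_apply, RCLike.star_def]
    rw [Finset.sum_congr rfl (fun k _ => expand k)]
    rw [Finset.sum_add_distrib, Finset.sum_add_distrib, Finset.sum_add_distrib,
      ← Finset.mul_sum, ← Finset.mul_sum, ← Finset.mul_sum, ← Finset.mul_sum,
      h11, h12, h21, h22, Fin.sum_univ_two]
    simp only [hP, hQ, Matrix.of_apply, if_pos rfl]
    norm_num
    ring
  -- compute Q * P
  have s00 : ∑ j, w₁ j * ((starRingEnd ℂ) (w₁ j) + t * (starRingEnd ℂ) (w₂ j)) = 1 + t * t := by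
    calc ∑ j, w₁ j * ((starRingEnd ℂ) (w₁ j) + t * (starRingEnd ℂ) (w₂ j))
        = (∑ j, (starRingEnd ℂ) (w₁ j) * w₁ j) + t * ∑ j, (starRingEnd ℂ) (w₂ j) * w₁ j := by
          rw [Finset.mul_sum, ← Finset.sum_add_distrib]
          exact Finset.sum_congr rfl fun j _ => by ring
      _ = 1 + t * t := by rw [h11, h21]
  have s01 : ∑ j, w₁ j * ((t : ℂ) * (starRingEnd ℂ) (w₁ j) + (starRingEnd ℂ) (w₂ j)) = t + t := by
    calc ∑ j, w₁ j * ((t : ℂ) * (starRingEnd ℂ) (w₁ j) + (starRingEnd ℂ) (w₂ j))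
        = t * (∑ j, (starRingEnd ℂ) (w₁ j) * w₁ j) + ∑ j, (starRingEnd ℂ) (w₂ j) * w₁ j := by
          rw [Finset.mul_sum, ← Finset.sum_add_distrib]
          exact Finset.sum_congr rfl fun j _ => by ring
      _ = t + t := by rw [h11, h21]; ring
  have s10 : ∑ j, w₂ j * ((starRingEnd ℂ) (w₁ j) + t * (starRingEnd ℂ) (w₂ j)) = t + t := by
    calc ∑ j, w₂ j * ((starRingEnd ℂ) (w₁ j) + t * (starRingEnd ℂ) (w₂ j))
        = (∑ j, (starRingEnd ℂ) (w₁ j) * w₂ j) + t * ∑ j, (starRingEnd ℂ) (w₂ j) * w₂ j := by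
          rw [Finset.mul_sum, ← Finset.sum_add_distrib]
          exact Finset.sum_congr rfl fun j _ => by ring
      _ = t + t := by rw [h12, h22]; ring
  have s11 : ∑ j, w₂ j * ((t : ℂ) * (starRingEnd ℂ) (w₁ j) + (starRingEnd ℂ) (w₂ j)) = t * t + 1 := by
    calc ∑ j, w₂ j * ((t : ℂ) * (starRingEnd ℂ) (w₁ j) + (starRingEnd ℂ) (w₂ j))
        = t * (∑ j, (starRingEnd ℂ) (w₁ j) * w₂ j) + ∑ j, (starRingEnd ℂ) (w₂ j) * w₂ j := by
          rw [Finset.mul_sum, ← Finset.sum_add_distrib]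
          exact Finset.sum_congr rfl fun j _ => by ring
      _ = t * t + 1 := by rw [h12, h22]
  have hQP : Q * P = !![1 + (t : ℂ) ^ 2, 2 * (t : ℂ); 2 * (t : ℂ), 1 + (t : ℂ) ^ 2] := by
    ext k l
    fin_cases k <;> fin_cases l <;>
      simp only [hQ, hP, Matrix.mul_apply, Matrix.of_apply, Fin.mk_zero, Fin.mk_one,
        Fin.isValue, if_true, ite_true, one_ne_zero, if_false, ite_false,
        Matrix.cons_val', Matrix.cons_val_zero, Matrix.cons_val_one, Matrix.head_cons,
        Matrix.empty_val', Matrix.cons_val_fin_one, Matrix.head_fin_const]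
    · rw [s00]; ring
    · rw [s01]; ring
    · rw [s10]; ring
    · rw [s11]; ring
  -- the characteristic polynomial of Aᴴ A
  have hcp : (Aᴴ * A).charpoly
      = (X - C ((1 + (t : ℂ)) ^ 2)) * (X - C ((1 - (t : ℂ)) ^ 2)) * X ^ (n - 2) := by
    have h := charpoly_comm_aux P Q
    rw [hQP, charpoly_two_aux] at h
    rw [hM]
    have hXn : (X : ℂ[X]) ^ n = X ^ (n - 2) * X ^ 2 := by
      rw [← pow_add]; congr 1; omega
    apply mul_right_cancel₀ (pow_ne_zero 2 (X_ne_zero : (X : ℂ[X]) ≠ 0))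
    rw [h, hXn]; ring
  -- extract the multiset of squared singular values
  have hprod : Multiset.map (fun i => ((σ i : ℂ)) ^ 2) Finset.univ.val
      = ((1 + (t : ℂ)) ^ 2 ::ₘ (1 - (t : ℂ)) ^ 2 ::ₘ Multiset.replicate (n - 2) 0) := by
    have lhs : ∏ i, (X - C ((σ i : ℂ) ^ 2))
        = ((Multiset.map (fun i => ((σ i : ℂ)) ^ 2) Finset.univ.val).map
            (fun r => X - C r)).prod := by
      rw [Multiset.map_map, Finset.prod_eq_multiset_prod]
      rfl
    have rhs : (X - C ((1 + (t : ℂ)) ^ 2)) * (X - C ((1 - (t : ℂ)) ^ 2)) * X ^ (n - 2)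
        = (((1 + (t : ℂ)) ^ 2 ::ₘ (1 - (t : ℂ)) ^ 2 ::ₘ Multiset.replicate (n - 2) (0 : ℂ)).map
            (fun r => X - C r)).prod := by
      rw [Multiset.map_cons, Multiset.map_cons, Multiset.map_replicate,
        Multiset.prod_cons, Multiset.prod_cons, Multiset.prod_replicate]
      simp [mul_assoc]
    have key : ((Multiset.map (fun i => ((σ i : ℂ)) ^ 2) Finset.univ.val).map
            (fun r => X - C r)).prod
        = (((1 + (t : ℂ)) ^ 2 ::ₘ (1 - (t : ℂ)) ^ 2 ::ₘ Multiset.replicate (n - 2) (0 : ℂ)).map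
            (fun r => X - C r)).prod := by
      rw [← lhs, ← rhs, ← hσ, hcp]
    have := congrArg Polynomial.roots key
    rwa [Polynomial.roots_multiset_prod_X_sub_C, Polynomial.roots_multiset_prod_X_sub_C] at this
  -- transfer to ℝ
  have hre : Multiset.map (fun i => (σ i) ^ 2) Finset.univ.val
      = ((1 + t) ^ 2 ::ₘ (1 - t) ^ 2 ::ₘ Multiset.replicate (n - 2) 0) := by
    apply Multiset.map_injective Complex.ofReal_injective
    rw [Multiset.map_map, Multiset.map_cons, Multiset.map_cons, Multiset.map_replicate]
    convert hprod using 2 <;> push_cast <;> simp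
  -- reorder according to |t|
  have habs : Multiset.map (fun i => (σ i) ^ 2) Finset.univ.val
      = ((1 + |t|) ^ 2 ::ₘ (1 - |t|) ^ 2 ::ₘ Multiset.replicate (n - 2) 0) := by
    rcases abs_cases t with ⟨h, _⟩ | ⟨h, _⟩
    · rw [hre, h]
    · have e1 : (1 + |t|) ^ 2 = (1 - t) ^ 2 := by rw [h]; ring
      have e2 : (1 - |t|) ^ 2 = (1 + t) ^ 2 := by rw [h]; ring
      rw [e1, e2, Multiset.cons_swap]
      exact hre
  -- identify σ₀² and σ₁²
  set i0 : Fin n := ⟨0, by omega⟩ with hi0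
  set i1 : Fin n := ⟨1, by omega⟩ with hi1
  have hd_le_c : (1 - |t|) ^ 2 ≤ (1 + |t|) ^ 2 := by nlinarith [abs_nonneg t]
  have hub_rhs : ∀ x ∈ ((1 + |t|) ^ 2 ::ₘ (1 - |t|) ^ 2 ::ₘ Multiset.replicate (n - 2) (0:ℝ)),
      x ≤ (1 + |t|) ^ 2 := by
    intro x hx
    rcases Multiset.mem_cons.1 hx with rfl | hx
    · exact le_refl _
    rcases Multiset.mem_cons.1 hx with rfl | hx
    · exact hd_le_c
    · rw [Multiset.eq_of_mem_replicate hx]; positivity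
  have hmem_i0 : (i0 : Fin n) ∈ Finset.univ.val := by simp
  have hσ0_mem : σ i0 ^ 2 ∈ Multiset.map (fun i => (σ i) ^ 2) Finset.univ.val :=
    Multiset.mem_map.2 ⟨i0, hmem_i0, rfl⟩
  have hub_lhs : ∀ x ∈ Multiset.map (fun i => (σ i) ^ 2) Finset.univ.val, x ≤ σ i0 ^ 2 := by
    intro x hx
    obtain ⟨i, _, rfl⟩ := Multiset.mem_map.1 hx
    exact pow_le_pow_left₀ (hσ_nonneg i) (hσ_anti (by simp [hi0, Fin.le_def])) 2
  have h0 : σ i0 ^ 2 = (1 + |t|) ^ 2 := by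
    apply le_antisymm
    · exact hub_rhs _ (habs ▸ hσ0_mem)
    · exact hub_lhs _ (habs.symm ▸ Multiset.mem_cons_self _ _)
  -- remove σ₀² and identify σ₁²
  have hsplit : Multiset.map (fun i => (σ i) ^ 2) Finset.univ.val
      = σ i0 ^ 2 ::ₘ Multiset.map (fun i => (σ i) ^ 2) (Finset.univ.val.erase i0) := by
    conv_lhs => rw [← Multiset.cons_erase hmem_i0]
    rw [Multiset.map_cons]
  have hT : Multiset.map (fun i => (σ i) ^ 2) (Finset.univ.val.erase i0)
      = ((1 - |t|) ^ 2 ::ₘ Multiset.replicate (n - 2) 0) := by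
    have := hsplit.symm.trans habs
    rw [h0] at this
    exact (Multiset.cons_inj_right _).1 this
  have hmem_i1 : (i1 : Fin n) ∈ Finset.univ.val.erase i0 := by
    rw [Multiset.Nodup.mem_erase_iff Finset.univ.nodup]
    exact ⟨by simp [hi0, hi1, Fin.ext_iff], by simp⟩
  have hσ1_mem : σ i1 ^ 2 ∈ Multiset.map (fun i => (σ i) ^ 2) (Finset.univ.val.erase i0) :=
    Multiset.mem_map.2 ⟨i1, hmem_i1, rfl⟩
  have hub_T : ∀ x ∈ Multiset.map (fun i => (σ i) ^ 2) (Finset.univ.val.erase i0),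
      x ≤ σ i1 ^ 2 := by
    intro x hx
    obtain ⟨i, hi, rfl⟩ := Multiset.mem_map.1 hx
    have hne : i ≠ i0 := (Multiset.Nodup.mem_erase_iff Finset.univ.nodup).1 hi |>.1
    have : i1 ≤ i := by
      rw [Fin.le_def]
      have : i.val ≠ 0 := fun hc => hne (Fin.ext hc)
      simp [hi1]; omega
    exact pow_le_pow_left₀ (hσ_nonneg i) (hσ_anti this) 2
  have hub_T' : ∀ x ∈ ((1 - |t|) ^ 2 ::ₘ Multiset.replicate (n - 2) (0:ℝ)),
      x ≤ (1 - |t|) ^ 2 := by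
    intro x hx
    rcases Multiset.mem_cons.1 hx with rfl | hx
    · exact le_refl _
    · rw [Multiset.eq_of_mem_replicate hx]; positivity
  have h1' : σ i1 ^ 2 = (1 - |t|) ^ 2 := by
    apply le_antisymm
    · exact hub_T' _ (hT ▸ hσ1_mem)
    · exact hub_T _ (hT.symm ▸ Multiset.mem_cons_self _ _)
  -- conclude
  have e0 : σ i0 = 1 + |t| := by
    have hf : (σ i0 - (1 + |t|)) * (σ i0 + (1 + |t|)) = 0 := by linear_combination h0
    rcases mul_eq_zero.1 hf with hf | hf
    · linarith
    · nlinarith [hσ_nonneg i0, abs_nonneg t]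
  have e1 : σ i1 = 1 - |t| := by
    have hf : (σ i1 - (1 - |t|)) * (σ i1 + (1 - |t|)) = 0 := by linear_combination h1'
    rcases mul_eq_zero.1 hf with hf | hf
    · linarith
    · have h1n := hσ_nonneg i1
      have : σ i1 = 0 ∧ 1 - |t| = 0 := by constructor <;> linarith
      linarith [this.1, this.2]
  refine ⟨?_, ?_⟩
  · show (0 : ℝ) < σ i0
    rw [e0]
    positivity
  · show σ i1 / σ i0 = _
    rw [e0, e1, ht]
    simp
end

section
/- Let M ≥ 1, let x, z ∈ ℝ^M with z ≠ x, let v ∈ ℝ^M be a unit vector, let β > 0, and let ε be a real number with 0 ≤ ε < (√2 − 1)·|z − x|. Write d := |z − x| and cos θ := ⟨z − x, v⟩ / d (Euclidean inner product and norm). Then the doubly indexed family a(r, s) := (−1)^r · (Γ(β/2 + r) / (Γ(β/2) · s! · (r − s)!)) · 2^{r−s} · ε^{r+s} · (cos θ)^{r−s} · d^{−β − r − s}, defined for integers 0 ≤ s ≤ r, is absolutely summable, and its sum equals |z + εv − x|^{−β}. -/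
open Finset

noncomputable def bcoef (a : ℝ) (n : ℕ) : ℝ :=
  (∏ i ∈ Finset.range n, (a - i)) / n.factorial

lemma bcoef_zero (a : ℝ) : bcoef a 0 = 1 := by simp [bcoef]

lemma bcoef_succ (a : ℝ) (n : ℕ) :
    bcoef a (n + 1) * (n + 1) = bcoef a n * (a - n) := by
  have h2 : (n.factorial : ℝ) ≠ 0 := Nat.cast_ne_zero.mpr n.factorial_ne_zero
  have h3 : ((n:ℝ) + 1) ≠ 0 := by positivity
  rw [bcoef, bcoef, Finset.prod_range_succ, Nat.factorial_succ]
  push_cast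
  field_simp

lemma bcoef_master_summable (a : ℝ) {w : ℝ} (hw : |w| < 1) :
    Summable (fun n : ℕ => (1 + |a| + n) * |bcoef a n| * |w| ^ n) := by
  set ρ : ℝ := (1 + |w|) / 2 with hρdef
  have hw0 : 0 ≤ |w| := abs_nonneg w
  have hρw : |w| < ρ := by rw [hρdef]; linarith
  have hρ0 : 0 ≤ ρ := by positivity
  have hρ1 : ρ < 1 := by rw [hρdef]; linarith
  refine summable_of_ratio_norm_eventually_le hρ1 ?_
  have hN := Nat.le_ceil ((2 * (1 + |a|)) / (1 - |w|))
  refine Filter.eventually_atTop.2 ⟨⌈(2 * (1 + |a|)) / (1 - |w|)⌉₊, fun n hn => ?_⟩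
  have hn' : (2 * (1 + |a|)) / (1 - |w|) ≤ (n : ℝ) := hN.trans (Nat.cast_le.2 hn)
  have h1w : (0:ℝ) < 1 - |w| := by linarith
  have ha0 : 0 ≤ |a| := abs_nonneg a
  have hnn : (0:ℝ) ≤ (n:ℝ) := Nat.cast_nonneg n
  have hkey : (2 + |a| + n) * |w| ≤ ρ * (n + 1) := by
    rw [div_le_iff₀ h1w] at hn'
    rw [hρdef]
    nlinarith
  have hb := bcoef_succ a n
  have hb' : |bcoef a (n+1)| * ((n:ℝ)+1) = |bcoef a n| * |a - n| := by
    have : |bcoef a (n+1) * ((n:ℝ)+1)| = |bcoef a n * (a - n)| := by rw [hb]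
    rwa [abs_mul, abs_mul, abs_of_pos (show (0:ℝ) < (n:ℝ)+1 by positivity)] at this
  have hle : |a - (n:ℝ)| ≤ 1 + |a| + n := by
    have h := abs_sub a (n:ℝ)
    have : |(n:ℝ)| = (n:ℝ) := abs_of_nonneg hnn
    linarith [h, this.le]
  have hB : 0 ≤ |bcoef a n| := abs_nonneg _
  have hP : 0 ≤ |w| ^ n := pow_nonneg hw0 n
  have h1n : (0:ℝ) ≤ (1 + |a| + (↑(n+1):ℝ)) * |bcoef a (n+1)| * |w| ^ (n+1) := by positivity
  have h2n : (0:ℝ) ≤ (1 + |a| + (n:ℝ)) * |bcoef a n| * |w| ^ n := by positivity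
  rw [Real.norm_eq_abs, Real.norm_eq_abs, abs_of_nonneg h1n, abs_of_nonneg h2n]
  have h2 : (0:ℝ) < (n:ℝ) + 1 := by positivity
  rw [← mul_le_mul_iff_left₀ h2]
  calc (1 + |a| + (↑(n+1):ℝ)) * |bcoef a (n+1)| * |w| ^ (n+1) * ((n:ℝ)+1)
      = ((2 + |a| + n) * |w|) * (|bcoef a n| * |a - n|) * |w| ^ n := by
        push_cast
        linear_combination ((2 + |a| + (n:ℝ)) * |w| * |w| ^ n) * hb'
    _ ≤ (ρ * ((n:ℝ)+1)) * (|bcoef a n| * (1 + |a| + n)) * |w| ^ n := by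
        apply mul_le_mul_of_nonneg_right _ hP
        apply mul_le_mul hkey (mul_le_mul_of_nonneg_left hle hB) (by positivity) (by positivity)
    _ = ρ * ((1 + |a| + n) * |bcoef a n| * |w| ^ n) * ((n:ℝ)+1) := by ring

lemma summable_abs_bcoef (a : ℝ) {w : ℝ} (hw : |w| < 1) :
    Summable (fun n : ℕ => |bcoef a n| * |w| ^ n) := by
  refine Summable.of_nonneg_of_le (fun n => by positivity) (fun n => ?_)
    (bcoef_master_summable a hw)
  have h1 : (1:ℝ) ≤ 1 + |a| + n := by
    have := abs_nonneg a; have : (0:ℝ) ≤ (n:ℝ) := Nat.cast_nonneg n; linarith [abs_nonneg a]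
  have hp : (0:ℝ) ≤ |bcoef a n| * |w| ^ n := by positivity
  have hq : (0:ℝ) ≤ (|a| + (n:ℝ)) * (|bcoef a n| * |w| ^ n) := by positivity
  nlinarith [hp, hq]

lemma summable_bcoef_mul (a : ℝ) {w : ℝ} (hw : |w| < 1) :
    Summable (fun n : ℕ => bcoef a n * w ^ n) := by
  refine Summable.of_abs ?_
  simpa [abs_mul, abs_pow] using summable_abs_bcoef a hw

lemma bcoef_deriv_bound (a : ℝ) {r : ℝ} (hr : 1/2 ≤ r) {z : ℝ} (hz : |z| ≤ r) (n : ℕ) :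
    |bcoef a n * (n * z ^ (n-1))| ≤ 2 * ((1 + |a| + n) * |bcoef a n| * r ^ n) := by
  have hr0 : (0:ℝ) ≤ r := by linarith
  rcases n with _ | m
  · simp only [Nat.cast_zero, zero_mul, mul_zero, abs_zero]
    positivity
  · have e0 : (m + 1) - 1 = m := rfl
    have habs : |bcoef a (m+1) * (↑(m+1) * z ^ m)| =
        |bcoef a (m+1)| * (((m:ℝ)+1) * |z| ^ m) := by
      rw [abs_mul, abs_mul, abs_pow, Nat.abs_cast]
      push_cast
      ring
    rw [e0, habs]
    have hzr : |z| ^ m ≤ r ^ m := pow_le_pow_left₀ (abs_nonneg z) hz m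
    have hr2 : r ^ m ≤ 2 * r ^ (m+1) := by
      have hs : r ^ (m+1) = r ^ m * r := pow_succ r m
      nlinarith [pow_nonneg hr0 m]
    have h1 : ((m:ℝ)+1) ≤ 1 + |a| + (↑(m+1):ℝ) := by
      push_cast; linarith [abs_nonneg a]
    calc |bcoef a (m+1)| * (((m:ℝ)+1) * |z| ^ m)
        ≤ |bcoef a (m+1)| * ((1 + |a| + (↑(m+1):ℝ)) * (2 * r ^ (m+1))) := by
          apply mul_le_mul_of_nonneg_left _ (abs_nonneg _)
          apply mul_le_mul h1 (by linarith [hzr, hr2]) (by positivity) (by positivity)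
      _ = 2 * ((1 + |a| + (↑(m+1):ℝ)) * |bcoef a (m+1)| * r ^ (m+1)) := by ring

lemma summable_bcoef_at_zero (a : ℝ) : Summable (fun n : ℕ => bcoef a n * (0:ℝ) ^ n) := by
  apply summable_of_ne_finset_zero (s := ({0} : Finset ℕ))
  intro n hn
  simp only [Finset.mem_singleton] at hn
  simp [zero_pow hn]

lemma hasDerivAt_bcoef_tsum (a : ℝ) {y : ℝ} (hy : |y| < 1) :
    HasDerivAt (fun t : ℝ => ∑' n : ℕ, bcoef a n * t ^ n)
      (∑' n : ℕ, bcoef a n * (n * y ^ (n-1))) y := by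
  set r : ℝ := (1 + |y|)/2 with hrdef
  have hy0 := abs_nonneg y
  have hyr : |y| < r := by rw [hrdef]; linarith
  have hr1 : r < 1 := by rw [hrdef]; linarith
  have hr2 : 1/2 ≤ r := by rw [hrdef]; linarith
  have hr0 : (0:ℝ) ≤ r := by linarith
  have hrabs : |r| = r := abs_of_nonneg hr0
  have hu : Summable (fun n : ℕ => 2 * ((1 + |a| + n) * |bcoef a n| * r ^ n)) := by
    have := (bcoef_master_summable a (w := r) (by rw [hrabs]; exact hr1)).mul_left 2
    simpa [hrabs] using this
  refine hasDerivAt_tsum_of_isPreconnected hu isOpen_Ioo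
      (convex_Ioo (-r) r).isPreconnected
      (fun n z _ => ((hasDerivAt_pow n z).const_mul (bcoef a n)))
      (fun n z hz => ?_) (show (0:ℝ) ∈ Set.Ioo (-r) r by rw [Set.mem_Ioo]; constructor <;> linarith)
      (summable_bcoef_at_zero a) (Set.mem_Ioo.2 (abs_lt.1 hyr))
  have hzr : |z| ≤ r := le_of_lt (abs_lt.2 ⟨hz.1, hz.2⟩)
  simp only [Real.norm_eq_abs]
  exact bcoef_deriv_bound a hr2 hzr n

lemma summable_bcoef_deriv (a : ℝ) {y : ℝ} (hy : |y| < 1) :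
    Summable (fun n : ℕ => bcoef a n * (n * y ^ (n-1))) := by
  set r : ℝ := (1 + |y|)/2 with hrdef
  have hy0 := abs_nonneg y
  have hyr : |y| ≤ r := by rw [hrdef]; linarith
  have hr1 : r < 1 := by rw [hrdef]; linarith
  have hr2 : 1/2 ≤ r := by rw [hrdef]; linarith
  have hr0 : (0:ℝ) ≤ r := by linarith
  have hrabs : |r| = r := abs_of_nonneg hr0
  have hu : Summable (fun n : ℕ => 2 * ((1 + |a| + n) * |bcoef a n| * r ^ n)) := by
    have := (bcoef_master_summable a (w := r) (by rw [hrabs]; exact hr1)).mul_left 2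
    simpa [hrabs] using this
  refine Summable.of_norm_bounded hu (fun n => ?_)
  simp only [Real.norm_eq_abs]
  exact bcoef_deriv_bound a hr2 hyr n

lemma bcoef_ode (a : ℝ) {y : ℝ} (hy : |y| < 1) :
    (∑' n : ℕ, bcoef a n * (n * y ^ (n-1))) * (1 + y)
      = a * ∑' n : ℕ, bcoef a n * y ^ n := by
  have hS := (summable_bcoef_deriv a hy).hasSum
  set S := ∑' n : ℕ, bcoef a n * (↑n * y ^ (n-1)) with hSdef
  have hF := (summable_bcoef_mul a hy).hasSum
  have h2 : HasSum (fun n : ℕ => (n : ℝ) * bcoef a n * y ^ n) (S * y) := by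
    have heq : (fun n : ℕ => (bcoef a n * (n * y ^ (n-1))) * y)
        = fun n : ℕ => (n:ℝ) * bcoef a n * y ^ n := by
      funext n
      rcases n with _ | m
      · simp
      · have : (m + 1) - 1 = m := rfl
        rw [this]
        push_cast
        ring
    exact heq ▸ (hS.mul_right y)
  have h3 : HasSum (fun n : ℕ => bcoef a (n+1) * ((↑(n+1):ℝ) * y ^ n)) S := by
    have h := (hasSum_nat_add_iff' (f := fun n : ℕ => bcoef a n * (n * y ^ (n-1))) 1).mpr hS
    simpa using h
  have h3' : HasSum (fun n : ℕ => (a - n) * bcoef a n * y ^ n) S := by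
    have heq : (fun n : ℕ => bcoef a (n+1) * ((↑(n+1):ℝ) * y ^ n))
        = fun n : ℕ => (a - n) * bcoef a n * y ^ n := by
      funext n
      have hb := bcoef_succ a n
      push_cast
      linear_combination y ^ n * hb
    exact heq ▸ h3
  have h4 := h3'.add h2
  have h5 : HasSum (fun n : ℕ => a * (bcoef a n * y ^ n)) (S + S * y) := by
    have heq : (fun n : ℕ => (a - n) * bcoef a n * y ^ n + (n:ℝ) * bcoef a n * y ^ n)
        = fun n : ℕ => a * (bcoef a n * y ^ n) := by
      funext n; ring
    exact heq ▸ h4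
  have h6 := hF.mul_left a
  have h7 := h5.unique h6
  linarith [h7]

lemma bcoef_K_deriv (a : ℝ) {y : ℝ} (hy : y ∈ Set.Ioo (-1:ℝ) 1) :
    HasDerivAt (fun t : ℝ => (∑' n : ℕ, bcoef a n * t ^ n) * (1 + t) ^ (-a)) 0 y := by
  have hy' : |y| < 1 := abs_lt.2 ⟨hy.1, hy.2⟩
  have hp : (0:ℝ) < 1 + y := by linarith [hy.1]
  have hF := hasDerivAt_bcoef_tsum a hy'
  have hR : HasDerivAt (fun t : ℝ => (1 + t) ^ (-a)) (-a * (1 + y) ^ (-a - 1)) y := by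
    have h1 : HasDerivAt (fun t : ℝ => 1 + t) 1 y := (hasDerivAt_id y).const_add 1
    have h2 := Real.hasDerivAt_rpow_const (x := 1 + y) (p := -a) (Or.inl hp.ne')
    exact (h2.comp y h1).congr_deriv (by ring)
  have hmul := hF.mul hR
  have hode := bcoef_ode a hy'
  have hsplit : (1 + y) ^ (-a) = (1 + y) ^ (-a - 1) * (1 + y) := by
    have h := Real.rpow_add hp (-a - 1) 1
    rw [Real.rpow_one] at h
    rw [show -a - 1 + 1 = -a by ring] at h
    exact h
  have hzero : (∑' n : ℕ, bcoef a n * (↑n * y ^ (n-1))) * (1 + y) ^ (-a)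
      + (∑' n : ℕ, bcoef a n * y ^ n) * (-a * (1 + y) ^ (-a - 1)) = 0 := by
    rw [hsplit]
    linear_combination ((1 + y) ^ (-a - 1)) * hode
  rw [← hzero]
  exact hmul

lemma bcoef_tsum_eq (a : ℝ) {u : ℝ} (hu : |u| < 1) :
    (∑' n : ℕ, bcoef a n * u ^ n) = (1 + u) ^ a := by
  have hK0 : (∑' n : ℕ, bcoef a n * (0:ℝ) ^ n) * (1 + (0:ℝ)) ^ (-a) = 1 := by
    rw [tsum_eq_single 0 (fun n hn => by simp [zero_pow hn])]
    simp [bcoef_zero]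
  have hu1 := abs_lt.1 hu
  have hsub : ∀ b, b ∈ Set.Icc (-|u|) |u| → b ∈ Set.Ioo (-1:ℝ) 1 := by
    intro b hb
    constructor <;> [linarith [hb.1]; linarith [hb.2]]
  have hconst : (∑' n : ℕ, bcoef a n * u ^ n) * (1 + u) ^ (-a) = 1 := by
    rcases le_or_gt 0 u with h0 | h0
    · have habs : |u| = u := abs_of_nonneg h0
      have := constant_of_has_deriv_right_zero
        (f := fun t : ℝ => (∑' n : ℕ, bcoef a n * t ^ n) * (1 + t) ^ (-a))
        (a := (0:ℝ)) (b := u)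
        (fun t ht => (bcoef_K_deriv a (hsub t ⟨by linarith [ht.1, abs_nonneg u],
            by linarith [ht.2, habs.ge]⟩)).continuousAt.continuousWithinAt)
        (fun t ht => (bcoef_K_deriv a (hsub t ⟨by linarith [ht.1, abs_nonneg u],
            by linarith [ht.2.le, habs.ge]⟩)).hasDerivWithinAt) u
        (Set.right_mem_Icc.2 h0)
      rw [this]; exact hK0
    · have habs : |u| = -u := abs_of_neg h0
      have := constant_of_has_deriv_right_zero
        (f := fun t : ℝ => (∑' n : ℕ, bcoef a n * t ^ n) * (1 + t) ^ (-a))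
        (a := u) (b := (0:ℝ))
        (fun t ht => (bcoef_K_deriv a (hsub t ⟨by linarith [ht.1, habs.ge],
            by linarith [ht.2, abs_nonneg u]⟩)).continuousAt.continuousWithinAt)
        (fun t ht => (bcoef_K_deriv a (hsub t ⟨by linarith [ht.1, habs.ge],
            by linarith [ht.2.le, abs_nonneg u]⟩)).hasDerivWithinAt) 0
        (Set.right_mem_Icc.2 h0.le)
      rw [← this]; exact hK0
  have hp : (0:ℝ) < 1 + u := by linarith [hu1.1]
  have h1 : (1 + u) ^ (-a) * (1 + u) ^ a = 1 := by
    rw [← Real.rpow_add hp]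
    simp
  calc (∑' n : ℕ, bcoef a n * u ^ n)
      = (∑' n : ℕ, bcoef a n * u ^ n) * ((1 + u) ^ (-a) * (1 + u) ^ a) := by
        rw [h1, mul_one]
    _ = ((∑' n : ℕ, bcoef a n * u ^ n) * (1 + u) ^ (-a)) * (1 + u) ^ a := by ring
    _ = 1 * (1 + u) ^ a := by rw [hconst]
    _ = (1 + u) ^ a := one_mul _

lemma hasSum_bcoef (a : ℝ) {u : ℝ} (hu : |u| < 1) :
    HasSum (fun n : ℕ => bcoef a n * u ^ n) ((1 + u) ^ a) := by
  have h := (summable_bcoef_mul a hu).hasSum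
  rwa [bcoef_tsum_eq a hu] at h

lemma Gamma_add_nat' (b : ℝ) (hb : 0 < b) (r : ℕ) :
    Real.Gamma (b + r) = Real.Gamma b * ∏ i ∈ Finset.range r, (b + i) := by
  induction r with
  | zero => simp
  | succ m ih =>
    have hxm : (0:ℝ) < b + m := by positivity
    have h1 : Real.Gamma ((b + m) + 1) = (b + m) * Real.Gamma (b + m) :=
      Real.Gamma_add_one hxm.ne'
    push_cast
    rw [show b + ((m:ℝ) + 1) = (b + m) + 1 by ring, h1, ih, Finset.prod_range_succ]
    ring

lemma gamma_eq_bcoef (b : ℝ) (hb : 0 < b) (r : ℕ) :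
    Real.Gamma (b + r)
      = (-1:ℝ)^r * bcoef (-b) r * (r.factorial : ℝ) * Real.Gamma b := by
  have hfac : (r.factorial : ℝ) ≠ 0 := Nat.cast_ne_zero.mpr r.factorial_ne_zero
  have hbc : bcoef (-b) r * (r.factorial : ℝ) = ∏ i ∈ Finset.range r, (-b - i) := by
    rw [bcoef]; field_simp
  have hprod : ∏ i ∈ Finset.range r, (-b - (i:ℝ))
      = (-1:ℝ)^r * ∏ i ∈ Finset.range r, (b + i) := by
    calc ∏ i ∈ Finset.range r, (-b - (i:ℝ))
        = ∏ i ∈ Finset.range r, ((-1) * (b + i)) :=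
          Finset.prod_congr rfl (fun i _ => by ring)
      _ = (-1:ℝ)^r * ∏ i ∈ Finset.range r, (b + i) := by
          rw [Finset.prod_mul_distrib, Finset.prod_const, Finset.card_range]
  have hsq : (-1:ℝ)^r * (-1:ℝ)^r = 1 := by
    rw [← mul_pow]; norm_num
  calc Real.Gamma (b + r) = Real.Gamma b * ∏ i ∈ Finset.range r, (b + i) :=
        Gamma_add_nat' b hb r
    _ = (-1:ℝ)^r * ((-1:ℝ)^r * ∏ i ∈ Finset.range r, (b + i)) * Real.Gamma b := by
        rw [← mul_assoc, hsq, one_mul]; ring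
    _ = (-1:ℝ)^r * (bcoef (-b) r * (r.factorial : ℝ)) * Real.Gamma b := by
        rw [hbc, hprod]
    _ = (-1:ℝ)^r * bcoef (-b) r * (r.factorial : ℝ) * Real.Gamma b := by ring

lemma bcoef_neg_eq (b : ℝ) (hb : 0 < b) (r : ℕ) :
    bcoef (-b) r = (-1:ℝ)^r * Real.Gamma (b + r) / ((r.factorial : ℝ) * Real.Gamma b) := by
  have hfac : (r.factorial : ℝ) ≠ 0 := Nat.cast_ne_zero.mpr r.factorial_ne_zero
  have hΓ : Real.Gamma b ≠ 0 := (Real.Gamma_pos_of_pos hb).ne'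
  have key : (-1:ℝ)^r * ((-1:ℝ)^r * bcoef (-b) r * (r.factorial:ℝ) * Real.Gamma b)
      = bcoef (-b) r * ((r.factorial:ℝ) * Real.Gamma b) := by
    have hsq : (-1:ℝ)^r * (-1:ℝ)^r = 1 := by rw [← mul_pow]; norm_num
    calc (-1:ℝ)^r * ((-1:ℝ)^r * bcoef (-b) r * (r.factorial:ℝ) * Real.Gamma b)
        = ((-1:ℝ)^r * (-1:ℝ)^r) * (bcoef (-b) r * ((r.factorial:ℝ) * Real.Gamma b)) := by
          ring
      _ = bcoef (-b) r * ((r.factorial:ℝ) * Real.Gamma b) := by rw [hsq, one_mul]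
  rw [gamma_eq_bcoef b hb r, key, mul_div_assoc, div_self (mul_ne_zero hfac hΓ), mul_one]

noncomputable def bigTerm (β ε c d : ℝ) (r s : ℕ) : ℝ :=
  (-1 : ℝ) ^ r *
    (Real.Gamma (β / 2 + (r : ℝ)) /
      (Real.Gamma (β / 2) * (s.factorial : ℝ) * ((r - s).factorial : ℝ))) *
  (2 : ℝ) ^ (r - s) * ε ^ (r + s) * (c / d) ^ (r - s) * d ^ (-β - (r : ℝ) - (s : ℝ))

lemma bigTerm_eq (β ε c d : ℝ) (hβ : 0 < β) (hd : 0 < d) {r s : ℕ} (hs : s ≤ r) :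
    bigTerm β ε c d r s
      = d ^ (-β) * (bcoef (-(β/2)) r *
          ((r.choose s : ℝ) * ((ε^2/d^2) ^ s * ((2*ε*c)/d^2) ^ (r - s)))) := by
  obtain ⟨k, rfl⟩ : ∃ k, r = s + k := ⟨r - s, by omega⟩
  have hrs : s + k - s = k := by omega
  have hb2 : (0:ℝ) < β/2 := by positivity
  have hΓ : Real.Gamma (β/2) ≠ 0 := (Real.Gamma_pos_of_pos hb2).ne'
  have hfs : (s.factorial : ℝ) ≠ 0 := Nat.cast_ne_zero.mpr s.factorial_ne_zero
  have hfk : (k.factorial : ℝ) ≠ 0 := Nat.cast_ne_zero.mpr k.factorial_ne_zero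
  have hfsk : ((s+k).factorial : ℝ) ≠ 0 := Nat.cast_ne_zero.mpr (s+k).factorial_ne_zero
  have hdne : d ≠ 0 := hd.ne'
  have hch : ((s+k).choose s : ℝ)
      = ((s+k).factorial : ℝ) / ((s.factorial : ℝ) * (k.factorial : ℝ)) := by
    rw [Nat.cast_choose ℝ (Nat.le_add_right s k), hrs]
  have hdpow : d ^ (-β - (↑(s+k):ℝ) - (s:ℝ)) = d ^ (-β) * ((d ^ (s+k) : ℝ))⁻¹ * ((d ^ s : ℝ))⁻¹ := by
    rw [show -β - (↑(s+k):ℝ) - (s:ℝ) = -β + (-(↑(s+k):ℝ)) + (-(s:ℝ)) by ring,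
      Real.rpow_add hd, Real.rpow_add hd, Real.rpow_neg hd.le ((↑(s+k):ℝ)),
      Real.rpow_neg hd.le ((s:ℝ)), Real.rpow_natCast d (s+k), Real.rpow_natCast d s]
  have hdβ : d ^ (-β) ≠ 0 := (Real.rpow_pos_of_pos hd _).ne'
  rw [bigTerm, hrs, hch, hdpow, bcoef_neg_eq (β/2) hb2 (s+k)]
  simp only [div_pow, mul_pow]
  field_simp
  ring

lemma bigTerm_abs (β ε c d : ℝ) (hβ : 0 < β) (hd : 0 < d) (hε0 : 0 ≤ ε) {r s : ℕ} (hs : s ≤ r) :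
    |bigTerm β ε c d r s|
      = d ^ (-β) * (|bcoef (-(β/2)) r| *
          ((r.choose s : ℝ) * ((ε^2/d^2) ^ s * ((2*ε*|c|)/d^2) ^ (r - s)))) := by
  rw [bigTerm_eq β ε c d hβ hd hs]
  have h1 : |d ^ (-β)| = d ^ (-β) := abs_of_pos (Real.rpow_pos_of_pos hd _)
  have h2 : |((r.choose s : ℝ))| = (r.choose s : ℝ) := abs_of_nonneg (Nat.cast_nonneg _)
  have h3 : |(ε^2/d^2) ^ s| = (ε^2/d^2) ^ s := abs_of_nonneg (by positivity)
  have h4 : |((2*ε*c)/d^2) ^ (r-s)| = ((2*ε*|c|)/d^2) ^ (r-s) := by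
    rw [abs_pow, abs_div, abs_mul, abs_mul, abs_two, abs_of_nonneg hε0,
      abs_of_nonneg (sq_nonneg d)]
  rw [abs_mul, abs_mul, abs_mul, abs_mul, h1, h2, h3, h4]

lemma bigTerm_row (β ε c d : ℝ) (hβ : 0 < β) (hd : 0 < d) (r : ℕ) :
    HasSum (fun s : ℕ => if s ≤ r then bigTerm β ε c d r s else 0)
      (d ^ (-β) * (bcoef (-(β/2)) r * (ε^2/d^2 + (2*ε*c)/d^2) ^ r)) := by
  have hsupp : ∀ s ∉ Finset.range (r+1),
      (if s ≤ r then bigTerm β ε c d r s else 0) = 0 := by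
    intro s hs
    rw [if_neg]
    simp only [Finset.mem_range] at hs
    omega
  have h : HasSum _ _ := hasSum_sum_of_ne_finset_zero hsupp
  have hsum : ∑ s ∈ Finset.range (r+1), (if s ≤ r then bigTerm β ε c d r s else 0)
      = d ^ (-β) * (bcoef (-(β/2)) r * (ε^2/d^2 + (2*ε*c)/d^2) ^ r) := by
    have h1 : ∀ s ∈ Finset.range (r+1), (if s ≤ r then bigTerm β ε c d r s else 0)
        = (d ^ (-β) * bcoef (-(β/2)) r) *
            ((ε^2/d^2) ^ s * ((2*ε*c)/d^2) ^ (r-s) * ((r.choose s : ℝ))) := by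
      intro s hs
      have hsr : s ≤ r := by simp only [Finset.mem_range] at hs; omega
      rw [if_pos hsr, bigTerm_eq β ε c d hβ hd hsr]
      ring
    rw [Finset.sum_congr rfl h1, ← Finset.mul_sum, ← add_pow]
    ring
  rw [← hsum]
  exact h

lemma bigTerm_row_abs (β ε c d : ℝ) (hβ : 0 < β) (hd : 0 < d) (hε0 : 0 ≤ ε) (r : ℕ) :
    HasSum (fun s : ℕ => |if s ≤ r then bigTerm β ε c d r s else 0|)
      (d ^ (-β) * (|bcoef (-(β/2)) r| * (ε^2/d^2 + (2*ε*|c|)/d^2) ^ r)) := by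
  have hsupp : ∀ s ∉ Finset.range (r+1),
      |if s ≤ r then bigTerm β ε c d r s else 0| = 0 := by
    intro s hs
    rw [if_neg, abs_zero]
    simp only [Finset.mem_range] at hs
    omega
  have h : HasSum _ _ := hasSum_sum_of_ne_finset_zero hsupp
  have hsum : ∑ s ∈ Finset.range (r+1), |if s ≤ r then bigTerm β ε c d r s else 0|
      = d ^ (-β) * (|bcoef (-(β/2)) r| * (ε^2/d^2 + (2*ε*|c|)/d^2) ^ r) := by
    have h1 : ∀ s ∈ Finset.range (r+1), |if s ≤ r then bigTerm β ε c d r s else 0|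
        = (d ^ (-β) * |bcoef (-(β/2)) r|) *
            ((ε^2/d^2) ^ s * ((2*ε*|c|)/d^2) ^ (r-s) * ((r.choose s : ℝ))) := by
      intro s hs
      have hsr : s ≤ r := by simp only [Finset.mem_range] at hs; omega
      rw [if_pos hsr, bigTerm_abs β ε c d hβ hd hε0 hsr]
      ring
    rw [Finset.sum_congr rfl h1, ← Finset.mul_sum, ← add_pow]
    ring
  rw [← hsum]
  exact h

/-- Generalized binomial series expansion of `|z + εv − x|^{−β}`: for a unit vector `v`,
`β > 0` and `0 ≤ ε < (√2 − 1)|z − x|`, the doubly indexed family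
`a(r,s) = (−1)^r (Γ(β/2 + r)/(Γ(β/2) s! (r−s)!)) 2^{r−s} ε^{r+s} (cos θ)^{r−s} d^{−β−r−s}`
(for `0 ≤ s ≤ r`, where `d = |z − x|` and `cos θ = ⟨z − x, v⟩/d`) is absolutely summable
with sum `|z + εv − x|^{−β}`. -/
theorem binomial_expansion_of_shifted_distance (M : ℕ) (hM : 1 ≤ M)
    (x z : EuclideanSpace ℝ (Fin M)) (hzx : z ≠ x)
    (v : EuclideanSpace ℝ (Fin M)) (hv : ‖v‖ = 1)
    (β : ℝ) (hβ : 0 < β)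
    (ε : ℝ) (hε0 : 0 ≤ ε) (hε : ε < (Real.sqrt 2 - 1) * ‖z - x‖) :
    Summable (fun p : ℕ × ℕ =>
      |if p.2 ≤ p.1 then
          (-1 : ℝ) ^ p.1 *
            (Real.Gamma (β / 2 + (p.1 : ℝ)) /
              (Real.Gamma (β / 2) * (p.2.factorial : ℝ) * ((p.1 - p.2).factorial : ℝ))) *
          (2 : ℝ) ^ (p.1 - p.2) * ε ^ (p.1 + p.2) *
          ((inner ℝ (z - x) v : ℝ) / ‖z - x‖) ^ (p.1 - p.2) *
          ‖z - x‖ ^ (-β - (p.1 : ℝ) - (p.2 : ℝ))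
        else 0|) ∧
    HasSum (fun p : ℕ × ℕ =>
      if p.2 ≤ p.1 then
          (-1 : ℝ) ^ p.1 *
            (Real.Gamma (β / 2 + (p.1 : ℝ)) /
              (Real.Gamma (β / 2) * (p.2.factorial : ℝ) * ((p.1 - p.2).factorial : ℝ))) *
          (2 : ℝ) ^ (p.1 - p.2) * ε ^ (p.1 + p.2) *
          ((inner ℝ (z - x) v : ℝ) / ‖z - x‖) ^ (p.1 - p.2) *
          ‖z - x‖ ^ (-β - (p.1 : ℝ) - (p.2 : ℝ))
        else 0)
      (‖z + ε • v - x‖ ^ (-β)) := by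
  have hd : (0:ℝ) < ‖z - x‖ := norm_pos_iff.2 (sub_ne_zero_of_ne hzx)
  set d : ℝ := ‖z - x‖ with hd_def
  set c : ℝ := (inner ℝ (z - x) v : ℝ) with hc_def
  show Summable (fun p : ℕ × ℕ => |if p.2 ≤ p.1 then bigTerm β ε c d p.1 p.2 else 0|) ∧
    HasSum (fun p : ℕ × ℕ => if p.2 ≤ p.1 then bigTerm β ε c d p.1 p.2 else 0)
      (‖z + ε • v - x‖ ^ (-β))
  have hdne : d ≠ 0 := hd.ne'
  have hcle : |c| ≤ d := by
    have h := abs_real_inner_le_norm (z - x) v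
    rw [hv, mul_one] at h
    rw [hc_def, hd_def]
    exact h
  -- the squared norm
  have hsq : ‖z + ε • v - x‖^2 = d^2 + 2*ε*c + ε^2 := by
    have h1 : z + ε • v - x = (z - x) + ε • v := by abel
    rw [h1, norm_add_sq_real, real_inner_smul_right, norm_smul, hv, Real.norm_eq_abs,
      mul_one, sq_abs, ← hc_def, ← hd_def]
    ring
  -- √2 facts and the main inequality
  have hs2 : Real.sqrt 2 ^ 2 = 2 := Real.sq_sqrt (by norm_num)
  have hs0 : (0:ℝ) ≤ Real.sqrt 2 := Real.sqrt_nonneg 2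
  have hs1 : (1:ℝ) ≤ Real.sqrt 2 := by nlinarith
  have hmain : 2*ε*d + ε^2 < d^2 := by
    have hE : (0:ℝ) ≤ (Real.sqrt 2 - 1) * d := by
      have : (0:ℝ) ≤ Real.sqrt 2 - 1 := by linarith
      positivity
    have h1 : ε*ε ≤ ε*((Real.sqrt 2 - 1)*d) := mul_le_mul_of_nonneg_left hε.le hε0
    have h2 : ε*((Real.sqrt 2 - 1)*d) ≤ ((Real.sqrt 2 - 1)*d)*((Real.sqrt 2 - 1)*d) :=
      mul_le_mul_of_nonneg_right hε.le hE
    have h3 : ε*d < ((Real.sqrt 2 - 1)*d)*d := mul_lt_mul_of_pos_right hε hd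
    nlinarith [sq_nonneg d]
  set u : ℝ := (2*ε*c + ε^2)/d^2 with hu_def
  have hd2 : (0:ℝ) < d^2 := by positivity
  have habs : |2*ε*c + ε^2| ≤ 2*ε*d + ε^2 := by
    have h1 : |2*ε*c| ≤ 2*ε*d := by
      rw [abs_mul, abs_mul, abs_two, abs_of_nonneg hε0]
      exact mul_le_mul_of_nonneg_left hcle (by positivity : (0:ℝ) ≤ 2*ε)
    calc |2*ε*c + ε^2| ≤ |2*ε*c| + |ε^2| := abs_add_le _ _
      _ ≤ 2*ε*d + ε^2 := by rw [abs_of_nonneg (sq_nonneg ε)]; linarith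
  have hu_abs : |u| < 1 := by
    rw [hu_def, abs_div, abs_of_pos hd2, div_lt_one hd2]
    exact lt_of_le_of_lt habs hmain
  have h1u : (0:ℝ) < 1 + u := by
    have := (abs_lt.1 hu_abs).1
    linarith
  -- the w for absolute convergence
  have hw1 : ε^2/d^2 + (2*ε*|c|)/d^2 < 1 := by
    rw [← add_div, div_lt_one hd2]
    have : 2*ε*|c| ≤ 2*ε*d := by nlinarith [abs_nonneg c, mul_le_mul_of_nonneg_left hcle (by positivity : (0:ℝ) ≤ 2*ε)]
    linarith
  have hw0 : (0:ℝ) ≤ ε^2/d^2 + (2*ε*|c|)/d^2 := by positivity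
  have hw_abs : |ε^2/d^2 + (2*ε*|c|)/d^2| < 1 := by
    rw [abs_of_nonneg hw0]; exact hw1
  -- value of the norm
  have hN2 : ‖z + ε • v - x‖^2 = d^2 * (1 + u) := by
    rw [hsq, hu_def]
    field_simp
    ring
  have hN0 : (0:ℝ) < ‖z + ε • v - x‖ := by
    rcases (norm_nonneg (z + ε • v - x)).lt_or_eq with h | h
    · exact h
    · exfalso
      have h2 : ‖z + ε • v - x‖^2 = 0 := by rw [← h]; ring
      rw [hN2] at h2
      nlinarith
  have hval : ‖z + ε • v - x‖ ^ (-β) = d ^ (-β) * (1 + u) ^ (-(β/2)) := by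
    have e1 : ‖z + ε • v - x‖ ^ (-β) = (‖z + ε • v - x‖^2) ^ (-(β/2)) := by
      rw [← Real.rpow_natCast ‖z + ε • v - x‖ 2, ← Real.rpow_mul (norm_nonneg _)]
      congr 1
      push_cast
      ring
    have e2 : ((d:ℝ)^2) ^ (-(β/2)) = d ^ (-β) := by
      rw [← Real.rpow_natCast d 2, ← Real.rpow_mul hd.le]
      congr 1
      push_cast
      ring
    rw [e1, hN2, Real.mul_rpow (sq_nonneg d) h1u.le, e2]
  -- connect u to the row sums
  have hxy : ε^2/d^2 + (2*ε*c)/d^2 = u := by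
    rw [hu_def]; ring
  -- Part A : absolute summability
  have hA : Summable (fun p : ℕ × ℕ => |if p.2 ≤ p.1 then bigTerm β ε c d p.1 p.2 else 0|) := by
    refine (summable_prod_of_nonneg (fun p => abs_nonneg _)).2
      ⟨fun r => (bigTerm_row_abs β ε c d hβ hd hε0 r).summable, ?_⟩
    have hbc : Summable (fun r : ℕ =>
        d ^ (-β) * (|bcoef (-(β/2)) r| * (ε^2/d^2 + (2*ε*|c|)/d^2) ^ r)) := by
      have h := (summable_abs_bcoef (-(β/2)) hw_abs)
      have h' : Summable (fun r : ℕ => |bcoef (-(β/2)) r| * (ε^2/d^2 + (2*ε*|c|)/d^2) ^ r) := by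
        refine h.congr (fun r => ?_)
        rw [abs_of_nonneg hw0]
      exact h'.mul_left _
    refine hbc.congr (fun r => ?_)
    exact ((bigTerm_row_abs β ε c d hβ hd hε0 r).tsum_eq).symm
  have hT : Summable (fun p : ℕ × ℕ => if p.2 ≤ p.1 then bigTerm β ε c d p.1 p.2 else 0) :=
    Summable.of_abs hA
  -- Part B : the sum
  have hbinm : HasSum (fun r : ℕ => d ^ (-β) * (bcoef (-(β/2)) r * u ^ r))
      (d ^ (-β) * (1 + u) ^ (-(β/2))) := (hasSum_bcoef (-(β/2)) hu_abs).mul_left _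
  have htsum : ∑' p : ℕ × ℕ, (if p.2 ≤ p.1 then bigTerm β ε c d p.1 p.2 else 0)
      = d ^ (-β) * (1 + u) ^ (-(β/2)) := by
    rw [Summable.tsum_prod' hT (fun r => (bigTerm_row β ε c d hβ hd r).summable)]
    rw [tsum_congr (fun r =>
      ((bigTerm_row β ε c d hβ hd r).tsum_eq).trans (by rw [hxy]))]
    exact hbinm.tsum_eq
  have hfinal := hT.hasSum
  rw [htsum, ← hval] at hfinal
  exact ⟨hA, hfinal⟩
end
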